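/- Let α > 1, δ > 0, l_max ≥ 0, and K ≥ 1 an integer. Suppose for each ℓ ∈ {1,...,K}, B_ℓ ≤ l_max·(α/(α-1) + 1)·(1+δ)^ℓ + Π_ℓ + p_ℓ, where p_ℓ ≤ (1+δ)^ℓ and the Π_ℓ satisfy Σ_{t≤ℓ} Π_t ≤ (α/(α-1))(1+δ)^ℓ for all ℓ. If a task has α·C̄ ≥ (1+δ)^{ℓ-1} (i.e., (1+δ)^ℓ ≤ α(1+δ)·C̄), then Σ_{ℓ'≤ℓ} B_{ℓ'} ≤ α·((l_max+1)·α/(α-1) + l_max·α/(δ(α-1)) + l_max + 1 + (l_max+1)/δ)·(1+δ)·C̄. -/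
import Mathlib


open Finset

lemma geom_aux (δ : ℝ) (hδ : 0 < δ) : ∀ n : ℕ,
    ∑ t ∈ Finset.Icc 1 n, (1 + δ) ^ t ≤ (1 + δ) ^ n * (1 + δ) / δ := by
  intro n
  induction n with
  | zero => simp; positivity
  | succ n ih =>
    rw [Finset.sum_Icc_succ_top (by omega)]
    have h1 : (0:ℝ) < (1 + δ) ^ n := by positivity
    have : (1 + δ) ^ (n + 1) = (1 + δ) ^ n * (1 + δ) := by ring
    rw [this]
    have h2 : (1 + δ) ^ n * (1 + δ) / δ + (1 + δ) ^ n * (1 + δ)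
        ≤ (1 + δ) ^ n * (1 + δ) * (1 + δ) / δ := by
      rw [div_add' _ _ _ (ne_of_gt hδ), div_le_div_iff₀ hδ hδ]
      nlinarith
    linarith

/-- Completion-time accounting of Theorem 3: summing the block makespans
B_{ℓ'} for ℓ' ≤ ℓ and using (1+δ)^ℓ ≤ α(1+δ)·C̄ yields the approximation bound. -/
theorem stmt_8 (α δ C : ℝ) (lmax K ℓ : ℕ)
    (hα : 1 < α) (hδ : 0 < δ) (hK : 1 ≤ K) (hℓ : ℓ ∈ Finset.Icc 1 K)
    (B Load p : ℕ → ℝ)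
    (hB : ∀ t ∈ Finset.Icc 1 K,
      B t ≤ (lmax : ℝ) * (α / (α - 1) + 1) * (1 + δ) ^ t + Load t + p t)
    (hp : ∀ t ∈ Finset.Icc 1 K, p t ≤ (1 + δ) ^ t)
    (hLoad : ∀ t ∈ Finset.Icc 1 K,
      ∑ s ∈ Finset.Icc 1 t, Load s ≤ (α / (α - 1)) * (1 + δ) ^ t)
    (hC : (1 + δ) ^ ℓ ≤ α * (1 + δ) * C) :
    ∑ t ∈ Finset.Icc 1 ℓ, B t ≤
      α * ((lmax + 1 : ℝ) * (α / (α - 1)) + (lmax : ℝ) * (α / (δ * (α - 1)))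
        + (lmax : ℝ) + 1 + ((lmax : ℝ) + 1) / δ) * (1 + δ) * C := by
  simp only [Finset.mem_Icc] at hℓ
  have hsub : Finset.Icc 1 ℓ ⊆ Finset.Icc 1 K := Finset.Icc_subset_Icc_right hℓ.2
  have hstep : ∑ t ∈ Finset.Icc 1 ℓ, B t ≤
      ∑ t ∈ Finset.Icc 1 ℓ, ((lmax : ℝ) * (α / (α - 1) + 1) * (1 + δ) ^ t + Load t + p t) :=
    Finset.sum_le_sum fun t ht => hB t (hsub ht)
  have hsplit : ∑ t ∈ Finset.Icc 1 ℓ, ((lmax : ℝ) * (α / (α - 1) + 1) * (1 + δ) ^ t + Load t + p t)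
      = (lmax : ℝ) * (α / (α - 1) + 1) * ∑ t ∈ Finset.Icc 1 ℓ, (1 + δ) ^ t
        + ∑ t ∈ Finset.Icc 1 ℓ, Load t + ∑ t ∈ Finset.Icc 1 ℓ, p t := by
    rw [Finset.sum_add_distrib, Finset.sum_add_distrib, Finset.mul_sum]
  have hG := geom_aux δ hδ ℓ
  have hPsum : ∑ t ∈ Finset.Icc 1 ℓ, p t ≤ ∑ t ∈ Finset.Icc 1 ℓ, (1 + δ) ^ t :=
    Finset.sum_le_sum fun t ht => hp t (hsub ht)
  have hL := hLoad ℓ (Finset.mem_Icc.mpr hℓ)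
  have hα1 : (0:ℝ) < α - 1 := by linarith
  have hcoef : (0:ℝ) ≤ (lmax : ℝ) * (α / (α - 1) + 1) := by positivity
  -- total bound in terms of (1+δ)^ℓ
  have hx : (0:ℝ) < (1 + δ) ^ ℓ := by positivity
  have htot : ∑ t ∈ Finset.Icc 1 ℓ, B t ≤
      ((lmax : ℝ) * (α / (α - 1) + 1) * ((1 + δ)/δ) + α / (α - 1) + (1 + δ)/δ)
        * (1 + δ) ^ ℓ := by
    have h1 : (lmax : ℝ) * (α / (α - 1) + 1) * ∑ t ∈ Finset.Icc 1 ℓ, (1 + δ) ^ t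
        ≤ (lmax : ℝ) * (α / (α - 1) + 1) * ((1 + δ) ^ ℓ * (1 + δ) / δ) :=
      mul_le_mul_of_nonneg_left hG hcoef
    have h2 : ∑ t ∈ Finset.Icc 1 ℓ, p t ≤ (1 + δ) ^ ℓ * (1 + δ) / δ := hPsum.trans hG
    calc ∑ t ∈ Finset.Icc 1 ℓ, B t ≤ _ := hstep
      _ = _ := hsplit
      _ ≤ (lmax : ℝ) * (α / (α - 1) + 1) * ((1 + δ) ^ ℓ * (1 + δ) / δ)
            + α / (α - 1) * (1 + δ) ^ ℓ + (1 + δ) ^ ℓ * (1 + δ) / δ := by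
        gcongr <;> linarith
      _ = ((lmax : ℝ) * (α / (α - 1) + 1) * ((1 + δ)/δ) + α / (α - 1) + (1 + δ)/δ)
            * (1 + δ) ^ ℓ := by ring
  have hcoef2 : ((lmax : ℝ) * (α / (α - 1) + 1) * ((1 + δ)/δ) + α / (α - 1) + (1 + δ)/δ)
      = (lmax + 1 : ℝ) * (α / (α - 1)) + (lmax : ℝ) * (α / (δ * (α - 1)))
        + (lmax : ℝ) + 1 + ((lmax : ℝ) + 1) / δ := by
    field_simp
    ring
  rw [hcoef2] at htot
  refine htot.trans ?_
  rw [mul_assoc]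
  have hpos : (0:ℝ) ≤ (lmax + 1 : ℝ) * (α / (α - 1)) + (lmax : ℝ) * (α / (δ * (α - 1)))
      + (lmax : ℝ) + 1 + ((lmax : ℝ) + 1) / δ := by positivity
  calc _ ≤ ((lmax + 1 : ℝ) * (α / (α - 1)) + (lmax : ℝ) * (α / (δ * (α - 1)))
        + (lmax : ℝ) + 1 + ((lmax : ℝ) + 1) / δ) * (α * (1 + δ) * C) :=
        mul_le_mul_of_nonneg_left hC hpos
    _ = α * ((lmax + 1 : ℝ) * (α / (α - 1)) + (lmax : ℝ) * (α / (δ * (α - 1)))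
        + (lmax : ℝ) + 1 + ((lmax : ℝ) + 1) / δ) * ((1 + δ) * C) := by ring
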